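/- Let k ≥ 0, let γ ∈ E'_k, and let r be an integer with 1 ≤ r ≤ f_{2k} and γ − f_{2k+2} + r ≥ 0. Then H_{γ−f_{2k+2}+r, f_{2k+1}} = (−1)^{r+1} · H_{f_{2k+3}/2 − f_{2k+1}, f_{2k+1}}. (Here f_{2k+3}/2 is the smallest element of E'_k.) -/

import Mathlib

/-- The substitution τ: 1 → 101, 0 → 1 on the alphabet {0,1}. -/
def tau (b : ℕ) : List ℕ := if b = 1 then [1, 0, 1] else [1]

/-- The iterated word τ^n(1). -/
def tauIter : ℕ → List ℕ
  | 0 => [1]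
  | n + 1 => ((tauIter n).map tau).flatten

/-- `s` is the fixed point of τ beginning with 1: it agrees with every
iterate `τ^n(1)` on its length. -/
def IsFixedSeq (s : ℕ → ℕ) : Prop :=
  ∀ n j, j < (tauIter n).length → s j = (tauIter n).getD j 0

/-- The sequence (f_n): f_0 = 1, f_1 = 2, f_{2n+2} = f_{2n} + f_{2n+1},
f_{2n+3} = f_{2n} + f_{2n+2}. -/
def IsFSeq (f : ℕ → ℕ) : Prop :=
  f 0 = 1 ∧ f 1 = 2 ∧ (∀ n, f (2*n+2) = f (2*n) + f (2*n+1)) ∧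
    (∀ n, f (2*n+3) = f (2*n) + f (2*n+2))

/-- `a` is the f-representation of `n`: digits in {0,1}, finitely supported,
a_i a_{i+1} = 0 for all i, a_i a_{i+2} = 0 for even i, and n = Σ a_i f_i. -/
def IsFRep (f : ℕ → ℕ) (n : ℕ) (a : ℕ → ℕ) : Prop :=
  (∀ i, a i ≤ 1) ∧ (∀ i, a i * a (i+1) = 0) ∧
  (∀ i, Even i → a i * a (i+2) = 0) ∧
  ∃ N, (∀ i, N ≤ i → a i = 0) ∧ n = ∑ i ∈ Finset.range N, a i * f i

/-- The truncated f-representation Φ_k(n) = Σ_{i=0}^{2k+2} a_i(n) f_i. -/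
def Phi (f : ℕ → ℕ) (a : ℕ → ℕ → ℕ) (k n : ℕ) : ℕ :=
  ∑ i ∈ Finset.range (2*k+3), a n i * f i

/-- The Hankel determinant H_{m,n} = det (s_{m+i+j})_{0 ≤ i,j ≤ n-1}. -/
def H (s : ℕ → ℕ) (m n : ℕ) : ℤ :=
  (Matrix.of fun i j : Fin n => (s (m + i.1 + j.1) : ℤ)).det

namespace BE

variable {f : ℕ → ℕ} {s : ℕ → ℕ}

lemma feN (hf : IsFSeq f) (n : ℕ) : f (2*n+2) = f (2*n) + f (2*n+1) := hf.2.2.1 n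
lemma foN (hf : IsFSeq f) (n : ℕ) : f (2*n+3) = f (2*n) + f (2*n+2) := hf.2.2.2 n

lemma fpos (hf : IsFSeq f) (m : ℕ) : 1 ≤ f m := by
  induction m using Nat.strong_induction_on with
  | _ m ih =>
    match m with
    | 0 => have := hf.1; omega
    | 1 => have := hf.2.1; omega
    | (m+2) =>
      rcases Nat.even_or_odd m with ⟨n, hn⟩ | ⟨n, hn⟩
      · have e : m + 2 = 2*n+2 := by omega
        rw [e, feN hf n]
        have := ih (2*n) (by omega)
        omega
      · have e : m + 2 = 2*n+3 := by omega
        rw [e, foN hf n]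
        have := ih (2*n) (by omega)
        omega

lemma fstep (hf : IsFSeq f) (m : ℕ) : f m < f (m+1) := by
  rcases Nat.even_or_odd m with ⟨n, hn⟩ | ⟨n, hn⟩
  · match n, hn with
    | 0, hn =>
      have h0 := hf.1; have h1 := hf.2.1
      have e2 : m + 1 = 1 := by omega
      have e : m = 0 := by omega
      rw [e2, e]; omega
    | (n+1), hn =>
      have h := foN hf n
      have h2 := feN hf n
      have hp := fpos hf (2*n)
      have e2 : m + 1 = 2*n+3 := by omega
      have e : m = 2*n+2 := by omega
      rw [e2, e]; omega
  · have h2 := feN hf n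
    have hp := fpos hf (2*n)
    have e2 : m + 1 = 2*n+2 := by omega
    have e : m = 2*n+1 := by omega
    rw [e2, e]; omega

lemma fmono (hf : IsFSeq f) : StrictMono f := strictMono_nat_of_lt_succ (fstep hf)

lemma fmono_le (hf : IsFSeq f) {a b : ℕ} (h : a ≤ b) : f a ≤ f b := (fmono hf).le_iff_le.mpr h

lemma f0 (hf : IsFSeq f) : f 0 = 1 := hf.1
lemma f1 (hf : IsFSeq f) : f 1 = 2 := hf.2.1
lemma f2 (hf : IsFSeq f) : f 2 = 3 := by have := feN hf 0; have := f0 hf; have := f1 hf; norm_num at *; omega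
lemma f3 (hf : IsFSeq f) : f 3 = 4 := by have := foN hf 0; have := f0 hf; have := f2 hf; norm_num at *; omega
lemma f4 (hf : IsFSeq f) : f 4 = 7 := by have := feN hf 1; have := f2 hf; have := f3 hf; norm_num at *; omega
lemma f5 (hf : IsFSeq f) : f 5 = 10 := by have := foN hf 1; have := f2 hf; have := f4 hf; norm_num at *; omega

/-- parity: f(2n) is odd, f(2n+1) is even -/
lemma fparity (hf : IsFSeq f) (n : ℕ) : f (2*n) % 2 = 1 ∧ f (2*n+1) % 2 = 0 := by
  induction n with
  | zero => constructor <;> simp [hf.1, hf.2.1]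
  | succ n ih =>
    have h2 := feN hf n
    have h3 := foN hf n
    have e1 : 2*(n+1) = 2*n+2 := by ring
    have e2 : 2*(n+1)+1 = 2*n+3 := by ring
    have e3 : 2*n+2+1 = 2*n+3 := by ring
    rw [e1, e3]
    omega

end BE

-- word section
namespace BE
variable {f : ℕ → ℕ} {s : ℕ → ℕ}

lemma tauIter_succ₂ (n : ℕ) :
    tauIter (n+2) = tauIter (n+1) ++ tauIter n ++ tauIter (n+1) := by
  induction n with
  | zero => rfl
  | succ n ih =>
    have h : tauIter (n+3) = ((tauIter (n+1) ++ tauIter n ++ tauIter (n+1)).map tau).flatten := by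
      show ((tauIter (n+2)).map tau).flatten = _
      rw [ih]
    rw [h]
    simp only [List.map_append, List.flatten_append]
    rfl

lemma len_tauIter (hf : IsFSeq f) : ∀ n, (tauIter n).length = f (2*n) := by
  intro n
  induction n using Nat.strong_induction_on with
  | _ n ih =>
    match n with
    | 0 => simp [tauIter, hf.1]
    | 1 => show (tauIter 1).length = f 2; rw [f2 hf]; rfl
    | (n+2) =>
      rw [tauIter_succ₂]
      simp only [List.length_append]
      rw [ih (n+1) (by omega), ih n (by omega)]
      have h1 := feN hf (2*n+1)
      have h2 := foN hf (2*n)  -- f(2n+3) = f(2n)+f(2n+2)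
      have h3 := feN hf (2*n)
      have e1 : 2*(n+2) = 2*n+4 := by ring
      have e2 : 2*(n+1) = 2*n+2 := by ring
      have h4 := feN hf (n+1)  -- f(2(n+1)+2) = f(2(n+1)) + f(2(n+1)+1)
      have h5 := foN hf n      -- f(2n+3) = f (2n) + f(2n+2)
      have e3 : 2*(n+1)+2 = 2*n+4 := by ring
      have e4 : 2*(n+1)+1 = 2*n+3 := by ring
      rw [e3, e4, e2] at h4
      rw [e1, e2]
      omega

/-- position lemma (I): s (f(2n+3) + y) = s y for y < f(2n+2) -/
lemma sI (hf : IsFSeq f) (hs : IsFixedSeq s) (n y : ℕ) (hy : y < f (2*n+2)) :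
    s (f (2*n+3) + y) = s y := by
  have hlen2 := len_tauIter hf (n+2)
  have e1 : 2*(n+2) = 2*n+4 := by ring
  rw [e1] at hlen2
  have hlen1 := len_tauIter hf (n+1)
  have e2 : 2*(n+1) = 2*n+2 := by ring
  rw [e2] at hlen1
  have hlen0 := len_tauIter hf n
  have h4 := feN hf (n+1)
  have e3 : 2*(n+1)+2 = 2*n+4 := by ring
  have e4 : 2*(n+1)+1 = 2*n+3 := by ring
  rw [e3, e4, e2] at h4  -- f(2n+4) = f(2n+2) + f(2n+3)
  have h5 := foN hf n  -- f(2n+3) = f(2n) + f(2n+2)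
  have hidx : f (2*n+3) + y < (tauIter (n+2)).length := by omega
  have hstep := hs (n+2) (f (2*n+3) + y) hidx
  rw [hstep, tauIter_succ₂ n]
  have hlen12 : (tauIter (n+1) ++ tauIter n).length = f (2*n+3) := by
    simp only [List.length_append]; omega
  rw [List.getD_append_right _ _ _ _ (by omega : (tauIter (n+1) ++ tauIter n).length ≤ f (2*n+3) + y)]
  rw [hlen12]
  have : f (2*n+3) + y - f (2*n+3) = y := by omega
  rw [this]
  exact (hs (n+1) y (by omega)).symm

/-- position lemma (II): s (f(2n+2) + z) = s z for z < f(2n) -/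
lemma sII (hf : IsFSeq f) (hs : IsFixedSeq s) (n z : ℕ) (hz : z < f (2*n)) :
    s (f (2*n+2) + z) = s z := by
  have hlen2 := len_tauIter hf (n+2)
  have e1 : 2*(n+2) = 2*n+4 := by ring
  rw [e1] at hlen2
  have hlen1 := len_tauIter hf (n+1)
  have e2 : 2*(n+1) = 2*n+2 := by ring
  rw [e2] at hlen1
  have hlen0 := len_tauIter hf n
  have h4 := feN hf (n+1)
  have e3 : 2*(n+1)+2 = 2*n+4 := by ring
  have e4 : 2*(n+1)+1 = 2*n+3 := by ring
  rw [e3, e4, e2] at h4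
  have h5 := foN hf n
  have hidx : f (2*n+2) + z < (tauIter (n+2)).length := by omega
  have hstep := hs (n+2) (f (2*n+2) + z) hidx
  rw [hstep, tauIter_succ₂ n]
  rw [List.getD_append _ _ _ _ (by simp only [List.length_append]; omega)]
  rw [List.getD_append_right _ _ _ _ (by omega : (tauIter (n+1)).length ≤ f (2*n+2) + z)]
  rw [hlen1]
  have : f (2*n+2) + z - f (2*n+2) = z := by omega
  rw [this]
  exact (hs n z (by omega)).symm

lemma tauIter2_eq : tauIter 2 = [1,0,1,1,1,0,1] := by rfl

/-- concrete prefix values -/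
lemma sval (hs : IsFixedSeq s) : s 0 = 1 ∧ s 1 = 0 ∧ s 2 = 1 ∧ s 3 = 1 ∧ s 4 = 1 ∧ s 5 = 0 ∧ s 6 = 1 := by
  refine ⟨?_, ?_, ?_, ?_, ?_, ?_, ?_⟩ <;>
    · rw [hs 2 _ (by rw [tauIter2_eq]; simp)]
      rw [tauIter2_eq]
      rfl

end BE

-- periodicity section
namespace BE
variable {f : ℕ → ℕ} {s : ℕ → ℕ}

lemma tauIter3_eq : tauIter 3 = [1,0,1,1,1,0,1,1,0,1,1,0,1,1,1,0,1] := by rfl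

lemma sval2 (hs : IsFixedSeq s) : s 7 = 1 ∧ s 8 = 0 ∧ s 9 = 1 ∧ s 10 = 1 := by
  refine ⟨?_, ?_, ?_, ?_⟩ <;>
    · rw [hs 3 _ (by rw [tauIter3_eq]; simp)]
      rw [tauIter3_eq]
      rfl

/-- The main periodicity lemma: s has periods f(2j+1) and f(2j+2) on
positions < f(2j+3)/2 - 1. -/
lemma PP (hf : IsFSeq f) (hs : IsFixedSeq s) :
    ∀ j, (∀ y, 2*y + 4 ≤ f (2*j+3) → s (y + f (2*j+1)) = s y) ∧
         (∀ y, 2*y + 4 ≤ f (2*j+3) → s (y + f (2*j+2)) = s y) := by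
  intro j
  induction j using Nat.strong_induction_on with
  | _ j ih =>
    obtain ⟨v0, v1, v2, v3, v4, v5, v6⟩ := sval hs
    obtain ⟨v7, v8, v9, v10⟩ := sval2 hs
    match j with
    | 0 =>
      norm_num
      have hf1 := f1 hf; have hf2 := f2 hf; have hf3 := f3 hf
      constructor
      · intro y hy
        have : y = 0 := by omega
        subst this
        rw [hf1]; norm_num; omega
      · intro y hy
        have : y = 0 := by omega
        subst this
        rw [hf2]; norm_num; omega
    | 1 =>
      norm_num
      have hf2 := f2 hf; have hf3 := f3 hf; have hf4 := f4 hf; have hf5 := f5 hf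
      constructor
      · intro y hy
        have hy' : y ≤ 3 := by omega
        rw [hf3]
        interval_cases y <;> norm_num <;> omega
      · intro y hy
        have hy' : y ≤ 3 := by omega
        rw [hf4]
        interval_cases y <;> norm_num <;> omega
    | (j+2) =>
      have E1 : 2*(j+1)+2 = 2*j+4 := by ring
      have E2 : 2*(j+1)+3 = 2*j+5 := by ring
      have E3 : 2*(j+2)+2 = 2*j+6 := by ring
      have E4 : 2*(j+2)+3 = 2*j+7 := by ring
      have E5 : 2*(j+1) = 2*j+2 := by ring
      have E6 : 2*(j+2) = 2*j+4 := by ring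
      have E7 : 2*(j+2)+1 = 2*j+5 := by ring
      -- f recurrences, normalized
      have A1 : f (2*j+3) = f (2*j) + f (2*j+2) := foN hf j
      have E9 : 2*(j+1)+1 = 2*j+3 := by ring
      have E10 : 2*(j+2)+1 = 2*j+5 := by ring
      have A2 : f (2*j+4) = f (2*j+2) + f (2*j+3) := by
        have h := feN hf (j+1); rw [E1, E9, E5] at h; exact h
      have A3 : f (2*j+5) = f (2*j+2) + f (2*j+4) := by
        have h := foN hf (j+1); rw [E2, E1, E5] at h; exact h
      have A4 : f (2*j+6) = f (2*j+4) + f (2*j+5) := by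
        have h := feN hf (j+2); rw [E3, E10, E6] at h; exact h
      have A5 : f (2*j+7) = f (2*j+4) + f (2*j+6) := by
        have h := foN hf (j+2); rw [E4, E3, E6] at h; exact h
      have A6 : f (2*j+2) = f (2*j) + f (2*j+1) := feN hf j
      have P0 : 1 ≤ f (2*j) := fpos hf _
      have P1 : 1 ≤ f (2*j+1) := fpos hf _
      -- normalized prefix-position lemmas
      have SI1 : ∀ y, y < f (2*j+4) → s (f (2*j+5) + y) = s y := by
        intro y hy
        have h := sI hf hs (j+1) y (by rw [E1]; exact hy)
        rwa [E2] at h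
      have SI2 : ∀ y, y < f (2*j+6) → s (f (2*j+7) + y) = s y := by
        intro y hy
        have h := sI hf hs (j+2) y (by rw [E3]; exact hy)
        rwa [E4] at h
      have SII1 : ∀ z, z < f (2*j+2) → s (f (2*j+4) + z) = s z := by
        intro z hz
        have h := sII hf hs (j+1) z (by rw [E5]; exact hz)
        rwa [E1] at h
      have SII2 : ∀ z, z < f (2*j+4) → s (f (2*j+6) + z) = s z := by
        intro z hz
        have h := sII hf hs (j+2) z (by rw [E6]; exact hz)
        rwa [E3] at h
      constructor
      · -- odd shift f(2j+5), bound 2y+4 ≤ f(2j+7)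
        intro y hy
        rw [E4] at hy
        rw [E7]
        by_cases hc : y < f (2*j+4)
        · rw [Nat.add_comm]
          exact SI1 y hc
        · set z := y - f (2*j+4) with hzdef
          have hz2 : 2*z + 4 ≤ f (2*j+5) := by omega
          have hzlt : z < f (2*j+4) := by omega
          have e : y + f (2*j+5) = f (2*j+6) + z := by omega
          rw [e, SII2 z hzlt]
          by_cases hc2 : z < f (2*j+2)
          · have e2 : y = f (2*j+4) + z := by omega
            rw [e2, SII1 z hc2]
          · set w := z - f (2*j+2) with hwdef
            have hw2 : 2*w + 4 ≤ f (2*j+3) := by omega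
            have hwlt : w < f (2*j+4) := by omega
            have e3 : y = f (2*j+5) + w := by omega
            rw [e3, SI1 w hwlt]
            have hz : z = w + f (2*j+2) := by omega
            rw [hz]
            exact (ih j (by omega)).2 w hw2
      · -- even shift f(2j+6), bound 2y+4 ≤ f(2j+7)
        intro y hy
        rw [E4] at hy
        rw [E3]
        by_cases hc : y < f (2*j+4)
        · rw [Nat.add_comm]
          exact SII2 y hc
        · by_cases hc2 : y < f (2*j+5)
          · set z := y - f (2*j+4) with hzdef
            have hzlt : z < f (2*j+2) := by omega
            have e : y + f (2*j+6) = f (2*j+7) + z := by omega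
            rw [e, SI2 z (by omega)]
            have e2 : y = f (2*j+4) + z := by omega
            rw [e2, SII1 z hzlt]
          · set z := y - f (2*j+5) with hzdef
            have hz2 : 2*z + 4 ≤ f (2*j+3) := by omega
            have hzlt : z < f (2*j+4) := by omega
            have e : y + f (2*j+6) = f (2*j+7) + (f (2*j+2) + z) := by omega
            rw [e, SI2 _ (by omega)]
            have e2 : y = f (2*j+5) + z := by omega
            rw [e2, SI1 z hzlt, Nat.add_comm (f (2*j+2)) z]
            exact (ih j (by omega)).2 z hz2
end BE

-- tail lemmas
namespace BE
variable {f : ℕ → ℕ} {s : ℕ → ℕ}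

lemma TAIL (hf : IsFSeq f) (hs : IsFixedSeq s) (n z : ℕ) (h1 : 1 ≤ z) (h2 : z ≤ f (2*n+2)) :
    s (f (2*n+4) - z) = s (f (2*n+2) - z) := by
  have E1 : 2*(n+1)+2 = 2*n+4 := by ring
  have E9 : 2*(n+1)+1 = 2*n+3 := by ring
  have E5 : 2*(n+1) = 2*n+2 := by ring
  have A2 : f (2*n+4) = f (2*n+2) + f (2*n+3) := by
    have h := feN hf (n+1); rw [E1, E9, E5] at h; exact h
  have e : f (2*n+4) - z = f (2*n+3) + (f (2*n+2) - z) := by omega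
  rw [e]
  exact sI hf hs n _ (by omega)

lemma Vodd (hf : IsFSeq f) (hs : IsFixedSeq s) :
    ∀ n, ∀ z, 1 ≤ z → 2*z+2 ≤ f (2*n+1) → s (f (2*n+2) - z) = s (f (2*n+1) - z) := by
  intro n
  induction n using Nat.strong_induction_on with
  | _ n ih =>
    obtain ⟨v0, v1, v2, v3, v4, v5, v6⟩ := sval hs
    match n with
    | 0 => intro z h1 h2; have := f1 hf; norm_num at h2; omega
    | 1 =>
      intro z h1 h2
      have hf3 := f3 hf; have hf4 := f4 hf
      norm_num at h2 ⊢
      have hz : z = 1 := by omega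
      subst hz
      rw [hf3, hf4]
      norm_num
      omega
    | (n+2) =>
      intro z h1 h2
      have E1 : 2*(n+1)+2 = 2*n+4 := by ring
      have E2 : 2*(n+1)+3 = 2*n+5 := by ring
      have E5 : 2*(n+1) = 2*n+2 := by ring
      have E9 : 2*(n+1)+1 = 2*n+3 := by ring
      have E12 : 2*(n+2)+2 = 2*n+6 := by ring
      have E11 : 2*(n+2)+1 = 2*n+5 := by ring
      rw [E12, E11]
      rw [E11] at h2
      have A1 : f (2*n+3) = f (2*n) + f (2*n+2) := foN hf n
      have A2 : f (2*n+4) = f (2*n+2) + f (2*n+3) := by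
        have h := feN hf (n+1); rw [E1, E9, E5] at h; exact h
      have A3 : f (2*n+5) = f (2*n+2) + f (2*n+4) := by
        have h := foN hf (n+1); rw [E2, E1, E5] at h; exact h
      have P0 : 1 ≤ f (2*n) := fpos hf _
      have P3 : 1 ≤ f (2*n+3) := fpos hf _
      have SII1 : ∀ w, w < f (2*n+2) → s (f (2*n+4) + w) = s w := by
        intro w hw
        have h := sII hf hs (n+1) w (by rw [E5]; exact hw)
        rwa [E1] at h
      by_cases hc : z ≤ f (2*n+2)
      · have L1 := TAIL hf hs (n+1) z h1 (by rw [E1]; omega)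
        rw [E1] at L1
        have E13 : 2*(n+1)+4 = 2*n+6 := by ring
        rw [E13] at L1
        have L2 := TAIL hf hs n z h1 hc
        rw [L1, L2]
        have e : f (2*n+5) - z = f (2*n+4) + (f (2*n+2) - z) := by omega
        rw [e, SII1 _ (by omega)]
      · set w := z - f (2*n+2) with hwdef
        have hw1 : 1 ≤ w := by omega
        have hw2 : 2*w+2 ≤ f (2*n+3) := by omega
        have L1 := TAIL hf hs (n+1) z h1 (by rw [E1]; omega)
        rw [E1] at L1
        have E13 : 2*(n+1)+4 = 2*n+6 := by ring
        rw [E13] at L1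
        rw [L1]
        have e1 : f (2*n+4) - z = f (2*n+3) - w := by omega
        have e2 : f (2*n+5) - z = f (2*n+4) - w := by omega
        rw [e1, e2]
        have V := ih (n+1) (by omega) w hw1 (by rw [E9]; exact hw2)
        rw [E1, E9] at V
        exact V.symm

lemma Veven (hf : IsFSeq f) (hs : IsFixedSeq s) :
    ∀ n, ∀ z, 1 ≤ z → 2*z+2 ≤ f (2*n+1) → s (f (2*n+1) - z) = s (f (2*n) - z) := by
  intro n
  obtain ⟨v0, v1, v2, v3, v4, v5, v6⟩ := sval hs
  match n with
  | 0 => intro z h1 h2; have := f1 hf; norm_num at h2; omega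
  | 1 =>
    intro z h1 h2
    have hf2 := f2 hf; have hf3 := f3 hf
    norm_num at h2 ⊢
    have hz : z = 1 := by omega
    subst hz
    rw [hf2, hf3]
    norm_num
    omega
  | (n+2) =>
    intro z h1 h2
    have E1 : 2*(n+1)+2 = 2*n+4 := by ring
    have E2 : 2*(n+1)+3 = 2*n+5 := by ring
    have E5 : 2*(n+1) = 2*n+2 := by ring
    have E9 : 2*(n+1)+1 = 2*n+3 := by ring
    have E12 : 2*(n+2)+2 = 2*n+6 := by ring
    have E11 : 2*(n+2)+1 = 2*n+5 := by ring
    have E14 : 2*(n+2) = 2*n+4 := by ring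
    rw [E11, E14]
    rw [E11] at h2
    have A1 : f (2*n+3) = f (2*n) + f (2*n+2) := foN hf n
    have A2 : f (2*n+4) = f (2*n+2) + f (2*n+3) := by
      have h := feN hf (n+1); rw [E1, E9, E5] at h; exact h
    have A3 : f (2*n+5) = f (2*n+2) + f (2*n+4) := by
      have h := foN hf (n+1); rw [E2, E1, E5] at h; exact h
    have P0 : 1 ≤ f (2*n) := fpos hf _
    have P3 : 1 ≤ f (2*n+3) := fpos hf _
    have SII1 : ∀ w, w < f (2*n+2) → s (f (2*n+4) + w) = s w := by
      intro w hw
      have h := sII hf hs (n+1) w (by rw [E5]; exact hw)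
      rwa [E1] at h
    by_cases hc : z ≤ f (2*n+2)
    · have e : f (2*n+5) - z = f (2*n+4) + (f (2*n+2) - z) := by omega
      rw [e, SII1 _ (by omega)]
      exact (TAIL hf hs n z h1 hc).symm
    · set w := z - f (2*n+2) with hwdef
      have hw1 : 1 ≤ w := by omega
      have hw2 : 2*w+2 ≤ f (2*n+3) := by omega
      have e1 : f (2*n+5) - z = f (2*n+4) - w := by omega
      have e2 : f (2*n+4) - z = f (2*n+3) - w := by omega
      rw [e1, e2]
      have V := Vodd hf hs (n+1) w hw1 (by rw [E9]; exact hw2)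
      rw [E1, E9] at V
      exact V

lemma Echain (hf : IsFSeq f) (hs : IsFixedSeq s) (k : ℕ) :
    ∀ M, 2*k+1 ≤ M → ∀ z, 1 ≤ z → 2*z+2 ≤ f (2*k+1) → s (f M - z) = s (f (2*k+1) - z) := by
  intro M hM
  induction M, hM using Nat.le_induction with
  | base => intro z _ _; rfl
  | succ M hM' ihM =>
    intro z h1 h2
    have hM : 2*k+1 ≤ M := hM'
    have hb : 2*z+2 ≤ f M := le_trans h2 (fmono_le hf (by omega))
    rcases Nat.even_or_odd M with ⟨m, hm⟩ | ⟨m, hm⟩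
    · -- M = 2m, pair (f(2m+1), f(2m)) : Veven
      have e : M = 2*m := by omega
      have hb2 : 2*z+2 ≤ f (2*m+1) := le_trans h2 (fmono_le hf (by omega))
      have V := Veven hf hs m z h1 hb2
      have e2 : M + 1 = 2*m+1 := by omega
      rw [e2]
      rw [V]
      have := ihM z h1 h2
      rw [e] at this
      exact this
    · -- M = 2m+1 : Vodd
      have e : M = 2*m+1 := by omega
      have hb2 : 2*z+2 ≤ f (2*m+1) := by rw [← e]; exact hb
      have V := Vodd hf hs m z h1 hb2
      have e2 : M + 1 = 2*m+2 := by omega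
      rw [e2]
      rw [V]
      have := ihM z h1 h2
      rw [e] at this
      exact this
end BE

-- numeration section
namespace BE
variable {f : ℕ → ℕ} {s : ℕ → ℕ}

lemma fineq1 (hf : IsFSeq f) (k : ℕ) : f (2*k+1) ≤ 2 * f (2*k) := by
  match k with
  | 0 =>
    have := f0 hf; have := f1 hf
    norm_num; omega
  | (k+1) =>
    have E1 : 2*(k+1)+1 = 2*k+3 := by ring
    have E2 : 2*(k+1) = 2*k+2 := by ring
    rw [E1, E2]
    have h1 := foN hf k
    have h2 : f (2*k) ≤ f (2*k+2) := fmono_le hf (by omega)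
    omega

lemma fineq2 (hf : IsFSeq f) (j : ℕ) : 2*f (2*j+2) + 2*f (2*j+1) ≤ f (2*j+5) + 2 := by
  have E1 : 2*(j+1)+2 = 2*j+4 := by ring
  have E2 : 2*(j+1)+3 = 2*j+5 := by ring
  have E5 : 2*(j+1) = 2*j+2 := by ring
  have E9 : 2*(j+1)+1 = 2*j+3 := by ring
  have A1 : f (2*j+3) = f (2*j) + f (2*j+2) := foN hf j
  have A2 : f (2*j+4) = f (2*j+2) + f (2*j+3) := by
    have h := feN hf (j+1); rw [E1, E9, E5] at h; exact h
  have A3 : f (2*j+5) = f (2*j+2) + f (2*j+4) := by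
    have h := foN hf (j+1); rw [E2, E1, E5] at h; exact h
  have A6 : f (2*j+2) = f (2*j) + f (2*j+1) := feN hf j
  have h1 := fineq1 hf j
  omega

lemma digit_bound (hf : IsFSeq f) (b : ℕ → ℕ) (hb1 : ∀ i, b i ≤ 1)
    (hb2 : ∀ i, b i * b (i+1) = 0) (hb3 : ∀ i, Even i → b i * b (i+2) = 0) :
    ∀ M, (∑ i ∈ Finset.range (M+1), b i * f i) < f (M+1) := by
  intro M
  induction M using Nat.strong_induction_on with
  | _ M ih =>
    rw [Finset.sum_range_succ]
    by_cases hbM : b M = 0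
    · rw [hbM]
      rcases M with _ | m
      · simp [hf.1, hf.2.1]
      · have h := ih m (by omega)
        have h2 : f (m+1) < f (m+1+1) := fstep hf (m+1)
        omega
    · have hbM1 : b M = 1 := by have := hb1 M; omega
      rw [hbM1, one_mul]
      rcases M with _ | M
      · simp [hf.1, hf.2.1]
      rcases M with _ | m
      · rcases Nat.mul_eq_zero.mp (hb2 0) with h0 | h0
        · have := f1 hf; have := f2 hf
          rw [Finset.sum_range_one, h0]
          norm_num
          omega
        · rw [h0] at hbM1; omega
      · -- M = m+1+1
        have hbm1 : b (m+1) = 0 := by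
          rcases Nat.mul_eq_zero.mp (hb2 (m+1)) with h0 | h0
          · exact h0
          · rw [h0] at hbM1; omega
        rcases Nat.even_or_odd m with ⟨t, ht⟩ | ⟨t, ht⟩
        · -- m even, M = m+2 = 2t+2
          have hbM2 : b (m+2) = 1 := hbM1
          have hbm : b m = 0 := by
            rcases Nat.mul_eq_zero.mp (hb3 m ⟨t, by omega⟩) with h0 | h0
            · exact h0
            · rw [h0] at hbM2; omega
          have e1 : ∑ i ∈ Finset.range (m+1+1), b i * f i = ∑ i ∈ Finset.range m, b i * f i := by
            rw [Finset.sum_range_succ, Finset.sum_range_succ, hbm, hbm1]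
            ring
          rw [e1]
          have hA : f (2*t+3) = f (2*t) + f (2*t+2) := foN hf t
          have e2 : m + 1 + 1 + 1 = 2*t+3 := by omega
          have e3 : m + 1 + 1 = 2*t+2 := by omega
          rw [e2, e3]
          rcases m with _ | m'
          · have ht0 : t = 0 := by omega
            subst ht0
            norm_num at hA ⊢
            have := fpos hf 0
            omega
          · have h := ih m' (by omega)
            have hmono : f (m'+1) ≤ f (2*t) := fmono_le hf (by omega)
            omega
        · -- m odd : m = 2t+1, M = 2t+3
          have e1 : ∑ i ∈ Finset.range (m+1+1), b i * f i = ∑ i ∈ Finset.range (m+1), b i * f i := by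
            rw [Finset.sum_range_succ, hbm1]
            ring
          rw [e1]
          have h := ih m (by omega)
          have hA : f (2*t+4) = f (2*t+2) + f (2*t+3) := by
            have h2 := feN hf (t+1)
            have E1 : 2*(t+1)+2 = 2*t+4 := by ring
            have E9 : 2*(t+1)+1 = 2*t+3 := by ring
            have E5 : 2*(t+1) = 2*t+2 := by ring
            rw [E1, E9, E5] at h2
            exact h2
          have e2 : m + 1 + 1 + 1 = 2*t+4 := by omega
          have e4 : m + 1 + 1 = 2*t+3 := by omega
          have e3 : m + 1 = 2*t+2 := by omega
          rw [e2, e4, e3]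
          rw [e3] at h
          omega
end BE

-- stripping section
namespace BE
variable {f : ℕ → ℕ} {s : ℕ → ℕ}

lemma STRIP (hf : IsFSeq f) (hs : IsFixedSeq s) (k G : ℕ) (hG2 : 2*G = f (2*k+3)) :
    ∀ γ : ℕ, ∀ b : ℕ → ℕ, (∀ i, b i ≤ 1) → (∀ i, b i * b (i+1) = 0) →
    (∀ i, Even i → b i * b (i+2) = 0) →
    ∀ T, 2*k+3 ≤ T → (∀ i, T ≤ i → b i = 0) → γ = ∑ i ∈ Finset.range T, b i * f i →
    (∑ i ∈ Finset.range (2*k+3), b i * f i) = G →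
    (∀ y, y ≤ 2 * f (2*k+1) - 2 → s (γ - f (2*k+1) + y) = s (G - f (2*k+1) + y)) ∧
    (∀ x, γ < x + f (2*k+2) → x + 2 ≤ γ → s (x + f (2*k+1)) = s x) := by
  intro γ
  induction γ using Nat.strong_induction_on with
  | _ γ ihγ =>
    intro b hb1 hb2 hb3 T hT hbT hγ hΦ
    have A1 : f (2*k+3) = f (2*k) + f (2*k+2) := foN hf k
    have A6 : f (2*k+2) = f (2*k) + f (2*k+1) := feN hf k
    have hq1 := fineq1 hf k
    have hfG : f (2*k+1) ≤ G := by omega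
    have hGγ : G ≤ γ := by
      rw [hγ, ← hΦ]
      exact Finset.sum_le_sum_of_subset (Finset.range_subset_range.mpr hT)
    by_cases hhigh : ∀ i, 2*k+3 ≤ i → b i = 0
    · -- base case : γ = G
      have hγG : γ = G := by
        rw [hγ, ← hΦ]
        exact (Finset.sum_subset (Finset.range_subset_range.mpr hT) (fun i _ hni => by
          rw [hhigh i (by simpa using hni)]; ring)).symm
      constructor
      · intro y _
        rw [hγG]
      · intro x hx1 hx2
        exact (PP hf hs k).1 x (by omega)
    · -- there is a high digit
      push_neg at hhigh
      obtain ⟨i0, hi0k, hi0⟩ := hhigh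
      have hi0b : b i0 = 1 := by have := hb1 i0; omega
      have hi0T : i0 < T := by
        by_contra h
        exact hi0 (hbT i0 (by omega))
      set N := Nat.findGreatest (fun i => 2*k+3 ≤ i ∧ b i = 1) T with hNdef
      have hN : 2*k+3 ≤ N ∧ b N = 1 :=
        Nat.findGreatest_spec (P := fun i => 2*k+3 ≤ i ∧ b i = 1) (n := T) (m := i0)
          (le_of_lt hi0T) (show 2*k+3 ≤ i0 ∧ b i0 = 1 from ⟨hi0k, hi0b⟩)
      have hNT : N ≤ T := Nat.findGreatest_le T
      have hNltT : N < T := by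
        rcases Nat.lt_or_ge N T with h | h
        · exact h
        · exfalso
          have := hbT N (by omega)
          omega
      have hmax : ∀ i, N < i → b i = 0 := by
        intro i hi
        by_cases hiT : i ≤ T
        · by_contra hbi
          have hbi1 : b i = 1 := by have := hb1 i; omega
          exact Nat.findGreatest_is_greatest hi hiT ⟨by omega, hbi1⟩
        · exact hbT i (by omega)
      -- the stripped digit function
      set b' : ℕ → ℕ := fun i => if i = N then 0 else b i with hb'def
      have hb'1 : ∀ i, b' i ≤ 1 := by
        intro i; by_cases h : i = N <;> simp [hb'def, h] <;> exact hb1 i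
      have hb'2 : ∀ i, b' i * b' (i+1) = 0 := by
        intro i
        by_cases h : i = N
        · simp [hb'def, h]
        · by_cases h2 : i+1 = N
          · simp [hb'def, h, h2]
          · simp [hb'def, h, h2]; exact Nat.mul_eq_zero.mp (hb2 i)
      have hb'3 : ∀ i, Even i → b' i * b' (i+2) = 0 := by
        intro i hev
        by_cases h : i = N
        · simp [hb'def, h]
        · by_cases h2 : i+2 = N
          · simp [hb'def, h, h2]
          · simp [hb'def, h, h2]; exact Nat.mul_eq_zero.mp (hb3 i hev)
      have hb'N : ∀ i, N ≤ i → b' i = 0 := by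
        intro i hi
        by_cases h : i = N
        · simp [hb'def, h]
        · simp [hb'def, h]; exact hmax i (by omega)
      set γ' := ∑ i ∈ Finset.range N, b i * f i with hγ'def
      have hγsplit : γ = γ' + f N := by
        rw [hγ]
        have h1 : ∑ i ∈ Finset.range T, b i * f i = ∑ i ∈ Finset.range (N+1), b i * f i := by
          refine (Finset.sum_subset (Finset.range_subset_range.mpr (by omega)) (fun i _ hni => ?_)).symm
          have : N < i := by simpa using hni
          rw [hmax i this]; ring
        rw [h1, Finset.sum_range_succ, hN.2]
        omega
      have hγ'b' : γ' = ∑ i ∈ Finset.range N, b' i * f i := by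
        refine Finset.sum_congr rfl (fun i hi => ?_)
        have : i ≠ N := by simp at hi; omega
        simp [hb'def, this]
      have hΦ' : (∑ i ∈ Finset.range (2*k+3), b' i * f i) = G := by
        rw [← hΦ]
        refine Finset.sum_congr rfl (fun i hi => ?_)
        have : i ≠ N := by simp at hi; omega
        simp [hb'def, this]
      have hfNpos : 1 ≤ f N := fpos hf N
      have hγ'γ : γ' < γ := by omega
      have IH := ihγ γ' hγ'γ b' hb'1 hb'2 hb'3 N hN.1 hb'N hγ'b' hΦ'
      have hGγ' : G ≤ γ' := by
        rw [hγ'def, ← hΦ]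
        exact Finset.sum_le_sum_of_subset (Finset.range_subset_range.mpr hN.1)
      -- digit bound: the next digit below N is absent
      have hbN1 : b (N-1) = 0 := by
        rcases Nat.mul_eq_zero.mp (hb2 (N-1)) with h0 | h0
        · exact h0
        · have e : N - 1 + 1 = N := by omega
          rw [e] at h0
          rw [h0] at hN
          omega
      -- the universal shift property for f N
      have hshift : ∀ w, w + 2 ≤ γ' + f (2*k+1) → s (w + f N) = s w := by
        intro w hw
        rcases Nat.even_or_odd N with ⟨j2, hj2⟩ | ⟨j2, hj2⟩
        · -- N even, N = 2j+4 with j = j2-2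
          obtain ⟨j, hj⟩ : ∃ j, N = 2*j+4 := ⟨j2 - 2, by omega⟩
          -- b (N-2) = 0 as well
          have hbN2 : b (2*j+2) = 0 := by
            rcases Nat.mul_eq_zero.mp (hb3 (2*j+2) ⟨j+1, by omega⟩) with h0 | h0
            · exact h0
            · have e : 2*j+2+2 = N := by omega
              rw [e] at h0
              rw [h0] at hN
              omega
          have hγ'small : γ' < f (2*j+2) := by
            have hd := digit_bound hf b hb1 hb2 hb3 (2*j+1)
            have e1 : 2*j+1+1 = 2*j+2 := by omega
            rw [e1] at hd
            have e2 : γ' = ∑ i ∈ Finset.range (2*j+2), b i * f i := by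
              rw [hγ'def]
              have e3 : N = (2*j+2) + 1 + 1 := by omega
              rw [e3, Finset.sum_range_succ, Finset.sum_range_succ]
              have e4 : b (2*j+2+1) = 0 := by
                have := hbN1
                have e5 : N - 1 = 2*j+2+1 := by omega
                rwa [e5] at this
              rw [e4, hbN2]
              ring
            omega
          have hk21 : f (2*k+1) ≤ f (2*j+1) := fmono_le hf (by omega)
          have hq2 := fineq2 hf j
          have hPP := (PP hf hs (j+1)).2 w (by
            have E2 : 2*(j+1)+3 = 2*j+5 := by ring
            rw [E2]
            omega)
          have E3 : 2*(j+1)+2 = 2*j+4 := by ring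
          rw [E3] at hPP
          rw [hj]
          exact hPP
        · -- N odd, N = 2j+3 with j = j2-1
          obtain ⟨j, hj⟩ : ∃ j, N = 2*j+3 := ⟨j2 - 1, by omega⟩
          have hγ'small : γ' < f (2*j+2) := by
            have hd := digit_bound hf b hb1 hb2 hb3 (2*j+1)
            have e1 : 2*j+1+1 = 2*j+2 := by omega
            rw [e1] at hd
            have e2 : γ' = ∑ i ∈ Finset.range (2*j+2), b i * f i := by
              rw [hγ'def]
              have e3 : N = (2*j+2) + 1 := by omega
              rw [e3, Finset.sum_range_succ]
              have e4 : b (2*j+2) = 0 := by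
                have := hbN1
                have e5 : N - 1 = 2*j+2 := by omega
                rwa [e5] at this
              rw [e4]
              ring
            omega
          have hk21 : f (2*k+1) ≤ f (2*j+1) := fmono_le hf (by omega)
          have hq2 := fineq2 hf j
          have hPP := (PP hf hs (j+1)).1 w (by
            have E2 : 2*(j+1)+3 = 2*j+5 := by ring
            rw [E2]
            omega)
          have E9 : 2*(j+1)+1 = 2*j+3 := by ring
          rw [E9] at hPP
          rw [hj]
          exact hPP
      have hp1 : 1 ≤ f (2*k+1) := fpos hf _
      constructor
      · -- (A) window transfer
        intro y hy
        have e : γ - f (2*k+1) + y = (γ' - f (2*k+1) + y) + f N := by omega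
        rw [e, hshift _ (by omega)]
        exact IH.1 y hy
      · -- (B) periodicity transfer
        intro x hx1 hx2
        by_cases hxN : f N ≤ x
        · have e1 : x + f (2*k+1) = ((x - f N) + f (2*k+1)) + f N := by omega
          rw [e1, hshift _ (by omega)]
          have h2 := IH.2 (x - f N) (by omega) (by omega)
          rw [h2]
          have e2 : x = (x - f N) + f N := by omega
          conv_rhs => rw [e2]
          exact (hshift _ (by omega)).symm
        · -- x < f N : single high digit case
          push_neg at hxN
          have hγ'G : γ' = G := by
            by_contra hne
            have hex : ∃ i1, 2*k+3 ≤ i1 ∧ i1 < N ∧ b i1 = 1 := by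
              by_contra hno
              push_neg at hno
              have : γ' = G := by
                rw [hγ'def, ← hΦ]
                refine (Finset.sum_subset (Finset.range_subset_range.mpr hN.1) (fun i hi hni => ?_)).symm
                have h1 : 2*k+3 ≤ i := by simpa using hni
                have h2 : i < N := by simpa using hi
                have := hno i h1 h2
                have := hb1 i
                have : b i = 0 := by omega
                rw [this]; ring
              exact hne this
            obtain ⟨i1, hi1k, hi1N, hi1b⟩ := hex
            have hsum : G + f i1 ≤ γ' := by
              rw [hγ'def, ← hΦ]
              have hdisj : Disjoint (Finset.range (2*k+3)) {i1} := by
                simp [Finset.disjoint_singleton_right]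
                omega
              have hsub : Finset.range (2*k+3) ∪ {i1} ⊆ Finset.range N := by
                intro i hi
                simp at hi ⊢
                omega
              calc ∑ i ∈ Finset.range (2*k+3), b i * f i + f i1
                  = ∑ i ∈ Finset.range (2*k+3) ∪ {i1}, b i * f i := by
                    rw [Finset.sum_union hdisj, Finset.sum_singleton, hi1b, one_mul]
                _ ≤ ∑ i ∈ Finset.range N, b i * f i :=
                    Finset.sum_le_sum_of_subset hsub
            have hmono1 : f (2*k+3) ≤ f i1 := fmono_le hf hi1k
            have hmono2 : f (2*k+2) ≤ f (2*k+3) := fmono_le hf (by omega)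
            -- then x ≥ γ - f(2k+2) + 1 > f N, contradiction
            omega
          -- small z near the left end of the block
          set z := f N - x with hzdef
          have hz1 : 1 ≤ z := by omega
          have hz2 : 2*z + 2 ≤ f (2*k+1) := by omega
          have hE := Echain hf hs k N (by omega) z hz1 hz2
          have e2 : x + f (2*k+1) = (f (2*k+1) - z) + f N := by omega
          rw [e2, hshift _ (by omega)]
          have e1 : x = f N - z := by omega
          rw [e1, hE]
end BE

namespace BE
variable {f : ℕ → ℕ} {s : ℕ → ℕ}

lemma HAlt (m n' : ℕ) (hodd : Odd n')
    (hper : ∀ x, m ≤ x → x < m + (n'+1) → s (x + (n'+1)) = s x) :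
    H s (m+1) (n'+1) = - H s m (n'+1) := by
  have hmat : (Matrix.of fun i j : Fin (n'+1) => (s (m + 1 + i.1 + j.1) : ℤ)) =
      (Matrix.of fun i j : Fin (n'+1) => (s (m + i.1 + j.1) : ℤ)).submatrix id (finRotate (n'+1)) := by
    ext i j
    simp only [Matrix.submatrix_apply, Matrix.of_apply, id]
    rw [finRotate_succ_apply]
    rcases eq_or_ne j (Fin.last n') with hj | hj
    · rw [hj]
      have hv : ((Fin.last n' + 1 : Fin (n'+1)) : ℕ) = 0 := by
        rw [Fin.val_add_one]
        simp
      rw [hv]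
      have hp := hper (m + i.1) (by omega) (by have := i.2; omega)
      have e : m + 1 + i.1 + (Fin.last n').1 = (m + i.1) + (n'+1) := by
        simp [Fin.last]
        omega
      have e2 : m + i.1 + 0 = m + i.1 := by omega
      rw [e, e2, hp]
    · have hv : ((j + 1 : Fin (n'+1)) : ℕ) = j.1 + 1 := by
        rw [Fin.val_add_one]
        simp [hj]
      rw [hv]
      have e : m + 1 + i.1 + j.1 = m + i.1 + (j.1 + 1) := by omega
      rw [e]
  show (Matrix.of fun i j : Fin (n'+1) => (s (m + 1 + i.1 + j.1) : ℤ)).det = _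
  rw [hmat, Matrix.det_permute' (finRotate (n'+1)) _, sign_finRotate,
    Nat.add_sub_cancel, Odd.neg_one_pow hodd]
  show (((-1 : ℤˣ) : ℤ)) * _ = _
  simp [H]

lemma Hchain (n' : ℕ) (hodd : Odd n') (p : ℕ) :
    ∀ d, (∀ x, p ≤ x → x < p + d + n' → s (x + (n'+1)) = s x) →
    H s (p + d) (n'+1) = (-1:ℤ)^d * H s p (n'+1) := by
  intro d
  induction d with
  | zero => simp
  | succ d ih =>
    intro hper
    have e : p + (d+1) = (p + d) + 1 := by omega
    rw [e, HAlt (p+d) n' hodd (fun x hx1 hx2 => hper x (by omega) (by omega)),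
      ih (fun x hx1 hx2 => hper x hx1 (by omega))]
    ring
end BE

theorem bottom_edge_T (f : ℕ → ℕ) (hf : IsFSeq f) (s : ℕ → ℕ) (hs : IsFixedSeq s) (a : ℕ → ℕ → ℕ) (ha : ∀ n, IsFRep f n (a n)) :
    ∀ k γ r : ℕ,
      Phi f a k γ = f (2*k+3) / 2 →
      1 ≤ r → r ≤ f (2*k) → f (2*k+2) ≤ γ + r →
      H s (γ + r - f (2*k+2)) (f (2*k+1)) =
        (-1 : ℤ)^(r+1) * H s (f (2*k+3) / 2 - f (2*k+1)) (f (2*k+1)) := by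
  intro k γ r hPhi hr1 hr2 hrγ
  obtain ⟨ha1, ha2, ha3, Nb, haN, hasum⟩ := ha γ
  have A1 := BE.foN hf k
  have A6 := BE.feN hf k
  have hq1 := BE.fineq1 hf k
  have hfoddk : f (2*k) % 2 = 1 := (BE.fparity hf k).1
  have hfe3 : f (2*k+3) % 2 = 0 := by
    have h := (BE.fparity hf (k+1)).2
    have e : 2*(k+1)+1 = 2*k+3 := by ring
    rwa [e] at h
  set G := f (2*k+3) / 2 with hGdef
  have hG2 : 2*G = f (2*k+3) := by omega
  set T := max Nb (2*k+3) with hTdef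
  have hNbT : Nb ≤ T := by rw [hTdef]; exact le_max_left _ _
  have hkT : 2*k+3 ≤ T := by rw [hTdef]; exact le_max_right _ _
  have hbT : ∀ i, T ≤ i → a γ i = 0 := fun i hi => haN i (le_trans hNbT hi)
  have hγT : γ = ∑ i ∈ Finset.range T, a γ i * f i := by
    conv_lhs => rw [hasum]
    refine Finset.sum_subset (Finset.range_subset_range.mpr hNbT) (fun i _ hni => ?_)
    rw [haN i (by simpa using hni)]
    ring
  have hΦG : (∑ i ∈ Finset.range (2*k+3), a γ i * f i) = G := by
    unfold Phi at hPhi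
    exact hPhi
  have HH := BE.STRIP hf hs k G hG2 γ (a γ) ha1 ha2 ha3 T hkT hbT hγT hΦG
  have hfk1G : f (2*k+1) ≤ G := by omega
  have hGγ : G ≤ γ := by
    rw [hγT, ← hΦG]
    exact Finset.sum_le_sum_of_subset (Finset.range_subset_range.mpr hkT)
  have hf1 : f 1 = 2 := hf.2.1
  have hn2 : 2 ≤ f (2*k+1) := by
    have : f 1 ≤ f (2*k+1) := BE.fmono_le hf (by omega)
    omega
  set n' := f (2*k+1) - 1 with hn'def
  have hn' : f (2*k+1) = n' + 1 := by omega
  have hfe1 : f (2*k+1) % 2 = 0 := (BE.fparity hf k).2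
  have hodd : Odd n' := by
    rw [Nat.odd_iff]
    omega
  set p := γ + r - f (2*k+2) with hpdef
  set d := f (2*k) - r with hddef
  have hpd : p + d = γ - f (2*k+1) := by omega
  have hper : ∀ x, p ≤ x → x < p + d + n' → s (x + (n'+1)) = s x := by
    intro x hx1 hx2
    have h := HH.2 x (by omega) (by omega)
    rwa [hn'] at h
  have hchain := BE.Hchain (s := s) n' hodd p d hper
  have hanchor : H s (p + d) (n'+1) = H s (G - f (2*k+1)) (n'+1) := by
    show (Matrix.of _).det = (Matrix.of _).det
    congr 1
    ext i j
    have hij : i.1 + j.1 ≤ 2 * f (2*k+1) - 2 := by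
      have h1 := i.2
      have h2 := j.2
      omega
    have hA := HH.1 (i.1 + j.1) hij
    have e1 : p + d + i.1 + j.1 = γ - f (2*k+1) + (i.1 + j.1) := by omega
    have e2 : G - f (2*k+1) + i.1 + j.1 = G - f (2*k+1) + (i.1 + j.1) := by omega
    simp only [Matrix.of_apply]
    rw [e1, e2, hA]
  have hsign : (-1:ℤ)^d = (-1:ℤ)^(r+1) := by
    have hev : Even (d + (r+1)) := by
      rw [Nat.even_iff]
      omega
    have hev2 : Even ((r+1) + (r+1)) := ⟨r+1, by ring⟩
    calc (-1:ℤ)^d = (-1:ℤ)^d * ((-1:ℤ)^((r+1)+(r+1))) := by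
          rw [Even.neg_one_pow hev2, mul_one]
      _ = ((-1:ℤ)^(d + (r+1))) * (-1:ℤ)^(r+1) := by
          rw [← pow_add, ← pow_add]
          ring_nf
      _ = (-1:ℤ)^(r+1) := by rw [Even.neg_one_pow hev, one_mul]
  have hfinal : H s p (n'+1) = (-1:ℤ)^(r+1) * H s (G - f (2*k+1)) (n'+1) := by
    have h2 : H s p (n'+1) = (-1:ℤ)^d * H s (p+d) (n'+1) := by
      rw [hchain, ← mul_assoc, ← pow_add]
      have : Even (d + d) := ⟨d, by ring⟩
      rw [Even.neg_one_pow this, one_mul]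
    rw [h2, hanchor, hsign]
  rw [hn'] at hfinal ⊢
  exact hfinal
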